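/- Let Z = (Z(x))_{x∈X} be a stochastic process with continuous nonnegative sample paths, and let η = (η(x))_{x∈X} be a stationary random field, independent of Z, with continuous sample paths and unit Fréchet margins P[η(x) ≤ z] = exp(−1/z) for all x ∈ X and z > 0. Then P[ limsup_{‖x‖→∞} Z(x) > 0 and lim_{‖x‖→∞} Z(x)/η(x) = 0 ] = 0. -/

import Mathlib

open MeasureTheory ProbabilityTheory Filter Topology

/-- Let `Z` be a process with continuous nonnegative sample paths and let
`η` be a stationary random field with continuous sample paths and unit Fréchet margins,
independent of `Z`.  Then almost surely it cannot happen that simultaneously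
`limsup_{‖x‖→∞} Z(x) > 0` and `Z(x)/η(x) → 0` as `‖x‖ → ∞`. -/
theorem no_vanishing_ratio_with_positive_limsup {Ω : Type*} [MeasureSpace Ω] {d : ℕ}
    [IsProbabilityMeasure (ℙ : Measure Ω)] (hd : 1 ≤ d)
    (Z η : Ω → (Fin d → ℝ) → ℝ)
    (hZmeas : Measurable Z) (hηmeas : Measurable η)
    (hZcont : ∀ᵐ ω ∂ℙ, Continuous (Z ω))
    (hZnonneg : ∀ᵐ ω ∂ℙ, ∀ x, 0 ≤ Z ω x)
    (hηcont : ∀ᵐ ω ∂ℙ, Continuous (η ω))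
    (hstat : ∀ h : Fin d → ℝ,
      IdentDistrib (fun ω => fun x => η ω (x + h)) (fun ω => fun x => η ω x) ℙ ℙ)
    (hfrechet : ∀ x : Fin d → ℝ, ∀ z : ℝ, 0 < z →
      ℙ {ω | η ω x ≤ z} = ENNReal.ofReal (Real.exp (-1 / z)))
    (hindep : IndepFun Z η ℙ) :
    ℙ {ω | 0 < Filter.limsup (Z ω) (cocompact (Fin d → ℝ))
        ∧ Tendsto (fun x => Z ω x / η ω x) (cocompact (Fin d → ℝ)) (𝓝 0)} = 0 := by
  classical
  haveI : Nonempty (Fin d) := ⟨⟨0, hd⟩⟩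
  haveI : Nontrivial (Fin d → ℝ) := Function.nontrivial
  -- a countable dense family of points
  obtain ⟨f, hf⟩ := exists_surjective_nat (Fin d → ℚ)
  set q : ℕ → (Fin d → ℝ) := fun m i => ((f m i : ℚ) : ℝ) with hqdef
  have hdense : ∀ (x : Fin d → ℝ) (ε : ℝ), 0 < ε → ∃ m, ‖q m - x‖ < ε := by
    intro x ε hε
    have hr : ∀ i, ∃ r : ℚ, x i < (r : ℝ) ∧ (r : ℝ) < x i + ε :=
      fun i => exists_rat_btwn (by linarith)
    choose r hr1 hr2 using hr
    obtain ⟨m, hm⟩ := hf r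
    refine ⟨m, ?_⟩
    rw [pi_norm_lt_iff hε]
    intro i
    have hqm : q m i = ((r i : ℚ) : ℝ) := by simp only [hqdef, hm]
    rw [Pi.sub_apply, hqm, Real.norm_eq_abs, abs_lt]
    exact ⟨by linarith [hr1 i], by linarith [hr2 i]⟩
  -- coordinate measurability
  have hZm : ∀ y, Measurable fun ω => Z ω y := fun y => (measurable_pi_apply y).comp hZmeas
  have hEm : ∀ y, Measurable fun ω => η ω y := fun y => (measurable_pi_apply y).comp hηmeas
  -- a.s. positivity at each fixed point
  have hpos : ∀ y : Fin d → ℝ, ℙ {ω | η ω y ≤ 0} = 0 := by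
    intro y
    have hb : ∀ j : ℕ, ℙ {ω | η ω y ≤ 0} ≤ ENNReal.ofReal (Real.exp (-((j : ℝ) + 1))) := by
      intro j
      have hz : (0 : ℝ) < 1 / ((j : ℝ) + 1) := by positivity
      have hfr := hfrechet y (1 / ((j : ℝ) + 1)) hz
      have heq : (-1 : ℝ) / (1 / ((j : ℝ) + 1)) = -((j : ℝ) + 1) := by
        field_simp
      calc ℙ {ω | η ω y ≤ 0} ≤ ℙ {ω | η ω y ≤ 1 / ((j : ℝ) + 1)} :=
            measure_mono fun ω h => le_trans h hz.le
        _ = ENNReal.ofReal (Real.exp (-((j : ℝ) + 1))) := by rw [hfr, heq]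
    have h1 : Tendsto (fun j : ℕ => -((j : ℝ) + 1)) atTop atBot := by
      apply tendsto_neg_atBot_iff.mpr
      exact tendsto_atTop_add_const_right _ 1 tendsto_natCast_atTop_atTop
    have h2 : Tendsto (fun j : ℕ => Real.exp (-((j : ℝ) + 1))) atTop (𝓝 0) :=
      Real.tendsto_exp_atBot.comp h1
    have h3 : Tendsto (fun j : ℕ => ENNReal.ofReal (Real.exp (-((j : ℝ) + 1)))) atTop (𝓝 0) := by
      have := ENNReal.tendsto_ofReal h2
      simpa using this
    exact le_antisymm (ge_of_tendsto' h3 hb) (zero_le)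
  -- sampled processes
  set ZQ : Ω → ℕ → ℝ := fun ω m => Z ω (q m) with hZQdef
  set EQ : Ω → ℕ → ℝ := fun ω m => η ω (q m) with hEQdef
  have hZQm : Measurable ZQ := measurable_pi_iff.mpr fun m => hZm (q m)
  have hEQm : Measurable EQ := measurable_pi_iff.mpr fun m => hEm (q m)
  have hindQ : IndepFun ZQ EQ ℙ := by
    have hφ : Measurable fun g : (Fin d → ℝ) → ℝ => fun m => g (q m) :=
      measurable_pi_iff.mpr fun m => measurable_pi_apply (q m)
    exact hindep.comp hφ hφ
  -- the thresholds
  set c : ℕ → ℝ := fun k => 1 / ((k : ℝ) + 1) with hcdef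
  have hcpos : ∀ k, 0 < c k := fun k => by rw [hcdef]; positivity
  -- the bad sets in sequence space
  set S : ℕ → Set ((ℕ → ℝ) × (ℕ → ℝ)) := fun k =>
    {p | (∀ n : ℕ, ∃ m, (n : ℝ) ≤ ‖q m‖ ∧ c k < p.1 m) ∧
         (∀ n : ℕ, ∃ N : ℕ, ∀ m, (N : ℝ) ≤ ‖q m‖ → c k < p.1 m → (n : ℝ) < p.2 m)} with hSdef
  have hSmeas : ∀ k, MeasurableSet (S k) := by
    intro k
    rw [hSdef]
    have h1 : MeasurableSet
        {p : (ℕ → ℝ) × (ℕ → ℝ) | ∀ n : ℕ, ∃ m, (n : ℝ) ≤ ‖q m‖ ∧ c k < p.1 m} := by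
      have heq : {p : (ℕ → ℝ) × (ℕ → ℝ) | ∀ n : ℕ, ∃ m, (n : ℝ) ≤ ‖q m‖ ∧ c k < p.1 m}
          = ⋂ n : ℕ, ⋃ m : ℕ, {p | (n : ℝ) ≤ ‖q m‖ ∧ c k < p.1 m} := by
        ext p; simp
      rw [heq]
      refine MeasurableSet.iInter fun n => MeasurableSet.iUnion fun m => ?_
      by_cases h : (n : ℝ) ≤ ‖q m‖
      · simp only [h, true_and]
        exact measurableSet_lt measurable_const (measurable_fst.eval)
      · simp only [h, false_and, Set.setOf_false]
        exact MeasurableSet.empty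
    have h2 : MeasurableSet
        {p : (ℕ → ℝ) × (ℕ → ℝ) |
          ∀ n : ℕ, ∃ N : ℕ, ∀ m, (N : ℝ) ≤ ‖q m‖ → c k < p.1 m → (n : ℝ) < p.2 m} := by
      have heq : {p : (ℕ → ℝ) × (ℕ → ℝ) |
            ∀ n : ℕ, ∃ N : ℕ, ∀ m, (N : ℝ) ≤ ‖q m‖ → c k < p.1 m → (n : ℝ) < p.2 m}
          = ⋂ n : ℕ, ⋃ N : ℕ, ⋂ m : ℕ,
              {p | (N : ℝ) ≤ ‖q m‖ → c k < p.1 m → (n : ℝ) < p.2 m} := by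
        ext p; simp
      rw [heq]
      refine MeasurableSet.iInter fun n => MeasurableSet.iUnion fun N =>
        MeasurableSet.iInter fun m => ?_
      by_cases h : (N : ℝ) ≤ ‖q m‖
      · simp only [h, true_implies]
        have heq2 : {p : (ℕ → ℝ) × (ℕ → ℝ) | c k < p.1 m → (n : ℝ) < p.2 m}
            = {p : (ℕ → ℝ) × (ℕ → ℝ) | c k < p.1 m}ᶜ ∪ {p | (n : ℝ) < p.2 m} := by
          ext p; simp [imp_iff_not_or]
        rw [heq2]
        exact ((measurableSet_lt measurable_const
          (measurable_fst.eval)).compl).union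
          (measurableSet_lt measurable_const (measurable_snd.eval))
      · have heq2 : {p : (ℕ → ℝ) × (ℕ → ℝ) | (N : ℝ) ≤ ‖q m‖ → c k < p.1 m → (n : ℝ) < p.2 m}
            = Set.univ := by
          ext p; simp [h]
        rw [heq2]; exact MeasurableSet.univ
    exact h1.inter h2
  -- the probabilistic core: each pulled-back bad set is null
  have hA : ∀ k, ℙ ((fun ω => (ZQ ω, EQ ω)) ⁻¹' S k) = 0 := by
    intro k
    have hpair : Measurable fun ω => (ZQ ω, EQ ω) := hZQm.prodMk hEQm
    haveI : IsProbabilityMeasure (Measure.map EQ ℙ) :=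
      Measure.isProbabilityMeasure_map hEQm.aemeasurable
    rw [← Measure.map_apply hpair (hSmeas k),
      (indepFun_iff_map_prod_eq_prod_map_map hZQm.aemeasurable hEQm.aemeasurable).mp hindQ,
      Measure.prod_apply (hSmeas k)]
    have hsec : ∀ a : ℕ → ℝ, (Measure.map EQ ℙ) (Prod.mk a ⁻¹' S k) = 0 := by
      intro a
      by_cases hP : ∀ n : ℕ, ∃ m, (n : ℝ) ≤ ‖q m‖ ∧ c k < a m
      · choose ms hms1 hms2 using hP
        have hsub : Prod.mk a ⁻¹' S k ⊆
            ⋂ n : ℕ, ⋃ N : ℕ, ⋂ i : ℕ, ⋂ _ : N ≤ i, {b : ℕ → ℝ | (n : ℝ) < b (ms i)} := by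
          intro b hb
          simp only [Set.mem_preimage, hSdef, Set.mem_setOf_eq] at hb
          simp only [Set.mem_iInter, Set.mem_iUnion, Set.mem_setOf_eq]
          intro n
          obtain ⟨N, hN⟩ := hb.2 n
          refine ⟨N, fun i hi => hN (ms i) ?_ (hms2 i)⟩
          exact le_trans (by exact_mod_cast hi) (hms1 i)
        refine measure_mono_null hsub ?_
        set ν := Measure.map EQ ℙ with hν
        set U := ⋂ n : ℕ, ⋃ N : ℕ, ⋂ i : ℕ, ⋂ _ : N ≤ i,
          {b : ℕ → ℝ | (n : ℝ) < b (ms i)} with hU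
        have hbound : ∀ j : ℕ,
            ν U ≤ ENNReal.ofReal (1 - Real.exp (-1 / ((j : ℝ) + 1))) := by
          intro j
          have hzpos : (0 : ℝ) < (j : ℝ) + 1 := by positivity
          set C : ℕ → Set (ℕ → ℝ) := fun N =>
            ⋂ i : ℕ, ⋂ _ : N ≤ i, {b : ℕ → ℝ | ((j + 1 : ℕ) : ℝ) < b (ms i)} with hC
          have hmono : Monotone C := by
            intro N N' hNN'
            refine Set.iInter_mono fun i => ?_
            exact Set.iInter_mono' fun hi => ⟨le_trans hNN' hi, le_rfl⟩
          have hstep1 : ν U ≤ ν (⋃ N, C N) := by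
            refine measure_mono ?_
            rw [hU]
            exact Set.iInter_subset _ (j + 1)
          have hstep2 : ν (⋃ N, C N) = ⨆ N, ν (C N) :=
            (hmono.directed_le).measure_iUnion
          have hstep3 : ∀ N, ν (C N) ≤ ENNReal.ofReal (1 - Real.exp (-1 / ((j : ℝ) + 1))) := by
            intro N
            have hCsub : C N ⊆ {b : ℕ → ℝ | ((j + 1 : ℕ) : ℝ) < b (ms N)} := by
              intro b hb
              simp only [hC, Set.mem_iInter] at hb
              exact hb N le_rfl
            refine le_trans (measure_mono hCsub) (le_of_eq ?_)
            have hmeasset : MeasurableSet {b : ℕ → ℝ | ((j + 1 : ℕ) : ℝ) < b (ms N)} :=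
              measurableSet_lt measurable_const (measurable_pi_apply _)
            rw [hν, Measure.map_apply hEQm hmeasset]
            have hpre : EQ ⁻¹' {b : ℕ → ℝ | ((j + 1 : ℕ) : ℝ) < b (ms N)}
                = {ω | η ω (q (ms N)) ≤ ((j + 1 : ℕ) : ℝ)}ᶜ := by
              ext ω
              simp [hEQdef, not_le]
            rw [hpre, prob_compl_eq_one_sub (measurableSet_le (hEm _) measurable_const),
              hfrechet _ _ (by exact_mod_cast Nat.succ_pos j)]
            have hcast : ((j + 1 : ℕ) : ℝ) = (j : ℝ) + 1 := by push_cast; ring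
            rw [hcast, ENNReal.ofReal_sub _ (Real.exp_nonneg _), ENNReal.ofReal_one]
          rw [hstep2] at hstep1
          exact le_trans hstep1 (iSup_le hstep3)
        have h1 : Tendsto (fun j : ℕ => -1 / ((j : ℝ) + 1)) atTop (𝓝 0) := by
          have := tendsto_one_div_add_atTop_nhds_zero_nat (𝕜 := ℝ)
          have hneg := this.neg
          simp only [neg_zero] at hneg
          convert hneg using 2 with j
          ring
        have h2 : Tendsto (fun j : ℕ => 1 - Real.exp (-1 / ((j : ℝ) + 1))) atTop (𝓝 0) := by
          have hexp : Tendsto (fun j : ℕ => Real.exp (-1 / ((j : ℝ) + 1))) atTop (𝓝 1) := by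
            have := (Real.continuous_exp.tendsto 0).comp h1
            simpa [Function.comp_def] using this
          have := (tendsto_const_nhds (x := (1 : ℝ)) (f := atTop)).sub hexp
          simpa using this
        have h3 : Tendsto (fun j : ℕ =>
            ENNReal.ofReal (1 - Real.exp (-1 / ((j : ℝ) + 1)))) atTop (𝓝 0) := by
          have := ENNReal.tendsto_ofReal h2
          simpa using this
        exact le_antisymm (ge_of_tendsto' h3 hbound) (zero_le)
      · have hempty : Prod.mk a ⁻¹' S k = ∅ := by
          refine Set.eq_empty_iff_forall_notMem.mpr fun b hb => ?_
          simp only [Set.mem_preimage, hSdef, Set.mem_setOf_eq] at hb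
          exact hP hb.1
        rw [hempty]
        exact measure_empty
    simp only [hsec, lintegral_zero]
  -- inclusion of the bad event
  have hsubBad : {ω | 0 < Filter.limsup (Z ω) (cocompact (Fin d → ℝ))
        ∧ Tendsto (fun x => Z ω x / η ω x) (cocompact (Fin d → ℝ)) (𝓝 0)}
      ⊆ (⋃ k, (fun ω => (ZQ ω, EQ ω)) ⁻¹' S k) ∪
        ({ω | ¬ Continuous (Z ω)} ∪ {ω | ¬ ∀ x, 0 ≤ Z ω x} ∪ ⋃ m, {ω | η ω (q m) ≤ 0}) := by
    intro ω hω
    simp only [Set.mem_setOf_eq] at hω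
    by_cases hcont : Continuous (Z ω)
    swap
    · exact Or.inr (Or.inl (Or.inl hcont))
    by_cases hnn : ∀ x, 0 ≤ Z ω x
    swap
    · exact Or.inr (Or.inl (Or.inr hnn))
    by_cases hηp : ∀ m : ℕ, 0 < η ω (q m)
    swap
    · push_neg at hηp
      obtain ⟨m, hm⟩ := hηp
      exact Or.inr (Or.inr (Set.mem_iUnion.mpr ⟨m, hm⟩))
    left
    -- extract a positive level
    have hex : ∃ c₀ : ℝ, 0 < c₀ ∧
        ∀ K : Set (Fin d → ℝ), IsCompact K → ∃ x, x ∉ K ∧ c₀ < Z ω x := by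
      by_contra hcon
      push_neg at hcon
      have hls : Filter.limsup (Z ω) (cocompact (Fin d → ℝ)) ≤ 0 := by
        refine le_of_forall_pos_le_add fun ε hε => ?_
        have hcb : IsCoboundedUnder (· ≤ ·) (cocompact (Fin d → ℝ)) (Z ω) :=
          isCoboundedUnder_le_of_le _ (x := 0) hnn
        have hev : ∀ᶠ x in cocompact (Fin d → ℝ), Z ω x ≤ ε := by
          obtain ⟨K, hK, hKle⟩ := hcon ε hε
          rw [eventually_iff, mem_cocompact]
          exact ⟨K, hK, fun x hx => hKle x hx⟩
        calc Filter.limsup (Z ω) (cocompact (Fin d → ℝ)) ≤ ε := limsup_le_of_le hcb hev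
          _ = 0 + ε := by ring
      exact absurd hω.1 (not_lt.mpr hls)
    obtain ⟨c₀, hc₀, hKprop⟩ := hex
    obtain ⟨K₀, hK₀⟩ := exists_nat_gt (1 / c₀)
    have hck : c K₀ < c₀ := by
      rw [hcdef]
      have h1 : 1 / c₀ < (K₀ : ℝ) + 1 := lt_trans hK₀ (lt_add_one _)
      have h2 : (0 : ℝ) < (K₀ : ℝ) + 1 := by positivity
      rw [div_lt_iff₀ h2]
      have := (div_lt_iff₀ hc₀).mp h1
      nlinarith
    refine Set.mem_iUnion.mpr ⟨K₀, ?_⟩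
    simp only [Set.mem_preimage, hSdef, Set.mem_setOf_eq]
    constructor
    · -- first property
      intro n
      obtain ⟨x, hxK, hxZ⟩ := hKprop (Metric.closedBall 0 ((n : ℝ) + 1))
        (isCompact_closedBall _ _)
      have hxn : ((n : ℝ) + 1) < ‖x‖ := by
        by_contra hle
        push_neg at hle
        exact hxK (by simpa [Metric.mem_closedBall, dist_zero_right] using hle)
      have hxO : x ∈ {y | c K₀ < Z ω y} := lt_trans hck hxZ
      have hO : IsOpen {y | c K₀ < Z ω y} := isOpen_lt continuous_const hcont
      obtain ⟨ε, hε, hball⟩ := Metric.isOpen_iff.mp hO x hxO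
      obtain ⟨m, hm⟩ := hdense x (min ε 1) (lt_min hε one_pos)
      have hmball : q m ∈ Metric.ball x ε := by
        rw [Metric.mem_ball, dist_eq_norm]
        exact lt_of_lt_of_le hm (min_le_left _ _)
      have hZq : c K₀ < Z ω (q m) := hball hmball
      refine ⟨m, ?_, hZq⟩
      have h1 : ‖x‖ - ‖q m‖ ≤ ‖x - q m‖ := norm_sub_norm_le _ _
      have h2 : ‖x - q m‖ = ‖q m - x‖ := norm_sub_rev _ _
      have h3 : ‖q m - x‖ < 1 := lt_of_lt_of_le hm (min_le_right _ _)
      linarith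
    · -- second property
      intro n
      have hε : (0 : ℝ) < c K₀ / ((n : ℝ) + 1) := by positivity
      have hev := hω.2
      rw [Metric.tendsto_nhds] at hev
      have hev2 := hev _ hε
      rw [eventually_iff, mem_cocompact] at hev2
      obtain ⟨K, hKc, hKsub⟩ := hev2
      obtain ⟨R, hR⟩ := hKc.isBounded.subset_closedBall 0
      refine ⟨⌈R⌉₊ + 1, fun m hqm hZq => ?_⟩
      have hqnotK : q m ∉ K := by
        intro hmem
        have := hR hmem
        rw [Metric.mem_closedBall, dist_zero_right] at this
        have hceil : R ≤ (⌈R⌉₊ : ℝ) := Nat.le_ceil R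
        have : ((⌈R⌉₊ + 1 : ℕ) : ℝ) ≤ R := le_trans hqm this
        push_cast at this
        linarith
      have hsmall : dist (Z ω (q m) / η ω (q m)) 0 < c K₀ / ((n : ℝ) + 1) := hKsub hqnotK
      rw [Real.dist_eq, sub_zero] at hsmall
      have hηm := hηp m
      have hratio : Z ω (q m) / η ω (q m) < c K₀ / ((n : ℝ) + 1) :=
        lt_of_le_of_lt (le_abs_self _) hsmall
      have hdiv : c K₀ / η ω (q m) < c K₀ / ((n : ℝ) + 1) :=
        lt_trans ((div_lt_div_iff_of_pos_right hηm).mpr hZq) hratio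
      have hn1 : (0 : ℝ) < (n : ℝ) + 1 := by positivity
      have hmul : c K₀ * ((n : ℝ) + 1) < c K₀ * η ω (q m) :=
        (div_lt_div_iff₀ hηm hn1).mp hdiv
      have hck0 := hcpos K₀
      nlinarith
  -- assemble
  refine measure_mono_null hsubBad ?_
  have h1 : ℙ (⋃ k, (fun ω => (ZQ ω, EQ ω)) ⁻¹' S k) = 0 := measure_iUnion_null hA
  have h2 : ℙ {ω | ¬ Continuous (Z ω)} = 0 := ae_iff.mp hZcont
  have h3 : ℙ {ω | ¬ ∀ x, 0 ≤ Z ω x} = 0 := ae_iff.mp hZnonneg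
  have h4 : ℙ (⋃ m, {ω | η ω (q m) ≤ 0}) = 0 := measure_iUnion_null fun m => hpos (q m)
  exact measure_union_null h1 (measure_union_null (measure_union_null h2 h3) h4)
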